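/- arXiv:1609.01429 — 4 statements merged into one kernel-verified Lean document; each statement's English description precedes it below -/
import Mathlib

section
/- Let ν be any multiplicative character on F_q, so that φν⁴ is an odd character. Then Σ_{j∈F_q*} (φν⁴)(j)V(j) = ν̄(a)·τ⁻¹·G₂(νN·M₈) + (φν̄)(a)·τ⁻¹·G₂(νN·M₈⁵). -/
open Finset
open scoped BigOperators Classical

lemma aux_norm (p n q : ℕ) [Fact p.Prime] (hn : 0 < n) (hq : q = p ^ n) (hq3 : q % 4 = 3)
    (F K : Type) [Field F] [Fintype F] [Field K] [Fintype K] [Algebra F K]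
    [Algebra (ZMod p) F]
    (hF : Fintype.card F = q) (hK : Fintype.card K = q ^ 2) :
    ∀ x : K, algebraMap F K (Algebra.norm F x) = x * x ^ q := by
  classical
  haveI : CharP F p := charP_of_injective_algebraMap' (ZMod p) p
  haveI : CharP K p := charP_of_injective_algebraMap' F p
  have hq2 : 3 ≤ q := by omega
  have hrank : Module.finrank F K = 2 := by
    have h := Module.card_eq_pow_finrank (K := F) (V := K)
    rw [hF, hK] at h
    exact (Nat.pow_right_injective (by omega) h.symm)
  -- the Frobenius x ↦ x^q as an F-algebra equivalence of K
  have hfr : ∀ x : K, ((frobenius K p ^ n : K →+* K) : K → K) x = x ^ q := by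
    intro x
    rw [RingHom.coe_pow, iterate_frobenius, hq]
  let fa : K →ₐ[F] K :=
    { toRingHom := (frobenius K p ^ n : K →+* K)
      commutes' := by
        intro r
        show (frobenius K p ^ n : K →+* K) (algebraMap F K r) = algebraMap F K r
        rw [hfr, ← map_pow, ← hF, FiniteField.pow_card] }
  have hfa : ∀ x : K, fa x = x ^ q := hfr
  have hbij : Function.Bijective fa :=
    (Finite.injective_iff_bijective).mp (fa.toRingHom.injective)
  let σ : K ≃ₐ[F] K := AlgEquiv.ofBijective fa hbij
  have hσ : ∀ x : K, σ x = x ^ q := hfr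
  -- generator of Kˣ
  obtain ⟨g, hg⟩ := IsCyclic.exists_generator (α := Kˣ)
  have ordg : orderOf g = q ^ 2 - 1 := by
    rw [orderOf_eq_card_of_forall_mem_zpowers hg, Nat.card_eq_fintype_card, Fintype.card_units, hK]
  have hσne : σ ≠ 1 := by
    intro h
    have h1 : (g : K) ^ q = (g : K) := by
      have := hσ (g : K)
      rw [h] at this
      simpa using this.symm
    have h2 : g ^ q = g := Units.ext (by rwa [Units.val_pow_eq_pow_val])
    have h3 : g ^ (q - 1) = 1 := by
      have : g ^ (q - 1) * g = g ^ q := by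
        rw [← pow_succ]
        congr 1
        omega
      rw [h2] at this
      exact mul_right_cancel (by rwa [one_mul])
    have h4 : orderOf g ∣ q - 1 := orderOf_dvd_of_pow_eq_one h3
    rw [ordg] at h4
    have := Nat.le_of_dvd (by omega) h4
    have : q ^ 2 ≤ q := by omega
    nlinarith
  have huniv : (Finset.univ : Finset (K ≃ₐ[F] K)) = {1, σ} := by
    have hcard : Fintype.card (K ≃ₐ[F] K) = 2 := by
      rw [← Nat.card_eq_fintype_card, IsGalois.card_aut_eq_finrank, hrank]
    have h2 : ({1, σ} : Finset (K ≃ₐ[F] K)).card = 2 := by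
      rw [Finset.card_insert_of_notMem (by simpa using hσne.symm), Finset.card_singleton]
    exact (Finset.eq_univ_of_card _ (h2.trans hcard.symm)).symm
  intro x
  rw [Algebra.norm_eq_prod_automorphisms, huniv,
    Finset.prod_insert (by simpa using hσne.symm), Finset.prod_singleton]
  rw [AlgEquiv.one_apply, hσ]

lemma aux_M4 (p n q : ℕ) [Fact p.Prime] (hn : 0 < n) (hq : q = p ^ n) (hq3 : q % 4 = 3)
    (F K : Type) [Field F] [Fintype F] [Field K] [Fintype K] [Algebra F K]
    [Algebra (ZMod p) F]
    (hF : Fintype.card F = q) (hK : Fintype.card K = q ^ 2)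
    (hcharF : ringChar F ≠ 2)
    (M₈ : MulChar K ℂ) (hM₈ : orderOf M₈ = 8) :
    ∀ w : K, (M₈ w) ^ 4 = ((quadraticChar F (Algebra.norm F w) : ℤ) : ℂ) := by
  classical
  have hq2 : 3 ≤ q := by omega
  have hnorm := aux_norm p n q hn hq hq3 F K hF hK
  obtain ⟨g, hg⟩ := IsCyclic.exists_generator (α := Kˣ)
  have ordg : orderOf g = q ^ 2 - 1 := by
    rw [orderOf_eq_card_of_forall_mem_zpowers hg, Nat.card_eq_fintype_card,
      Fintype.card_units, hK]
  set Nm : Kˣ →* Fˣ := ((Algebra.norm F : K →* F).comp (Units.coeHom K)).toHomUnits with hNm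
  have hNmcoe : ∀ u : Kˣ, (Nm u : F) = Algebra.norm F (u : K) := fun u => rfl
  have hNg : quadraticChar F (Algebra.norm F (g : K)) = -1 := by
    have hg0 : Algebra.norm F (g : K) ≠ 0 := by
      rw [Algebra.norm_ne_zero_iff]
      exact Units.ne_zero g
    rw [quadraticChar_eq_pow_of_char_ne_two hcharF hg0, hF]
    obtain ⟨t, hqt⟩ : ∃ t, q = 2 * t + 1 := ⟨q / 2, by omega⟩
    have ht2 : q / 2 = t := by omega
    have hpow : Algebra.norm F (g : K) ^ (q / 2) ≠ 1 := by
      intro h1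
      have h2 : algebraMap F K (Algebra.norm F (g : K) ^ (q / 2)) = 1 := by
        rw [h1, map_one]
      rw [map_pow, hnorm, ← pow_succ', ← pow_mul] at h2
      have h3 : g ^ ((q + 1) * (q / 2)) = 1 := by
        apply Units.ext
        rw [Units.val_pow_eq_pow_val, Units.val_one]
        exact h2
      have h4 : orderOf g ∣ (q + 1) * (q / 2) := orderOf_dvd_of_pow_eq_one h3
      rw [ordg, ht2] at h4
      have h5 := Nat.le_of_dvd (Nat.mul_pos (by omega) (by omega)) h4
      have e1 : (q + 1) * t = 2 * (t * t) + 2 * t := by rw [hqt]; ring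
      have e2 : q ^ 2 = 4 * (t * t) + 4 * t + 1 := by rw [hqt]; ring
      obtain ⟨s, hs⟩ : ∃ s, t * t = s := ⟨t * t, rfl⟩
      rw [hs] at e1 e2
      omega
    simp [hpow]
  set f : Kˣ →* ℂˣ := M₈.toUnitHom with hf
  have hfcoe : ∀ u : Kˣ, (f u : ℂ) = M₈ (u : K) := fun u => M₈.coe_toUnitHom u
  have key4 : ∀ (G : Type) (_ : Group G) (x : G) (k : ℤ), (x ^ k) ^ (4 : ℕ) = (x ^ (4 : ℕ)) ^ k := by
    intro G _ x k
    rw [← zpow_natCast (x ^ k), ← zpow_natCast x, ← zpow_mul, ← zpow_mul, mul_comm]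
  have hfg8 : (f g) ^ 8 = 1 := by
    apply Units.ext
    rw [Units.val_pow_eq_pow_val, hfcoe, Units.val_one]
    have : (M₈ ^ 8) ((g : Kˣ) : K) = 1 := by
      rw [← hM₈, pow_orderOf_eq_one M₈, MulChar.one_apply_coe]
    rwa [MulChar.pow_apply' _ (by norm_num)] at this
  have hfg4 : (f g) ^ 4 ≠ 1 := by
    intro h1
    have hone : M₈ ^ 4 = 1 := by
      apply MulChar.eq_one_iff.mpr
      intro u
      obtain ⟨k, hk⟩ := Subgroup.mem_zpowers_iff.mp (hg u)
      rw [← hk, MulChar.pow_apply' _ (by norm_num), ← hfcoe, map_zpow,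
        ← Units.val_pow_eq_pow_val, key4 ℂˣ _ (f g) k, h1, one_zpow, Units.val_one]
    have := orderOf_dvd_of_pow_eq_one hone
    rw [hM₈] at this
    omega
  have hfg4' : (f g) ^ 4 = -1 := by
    have hsq : ((f g) ^ 4 : ℂˣ) * ((f g) ^ 4) = 1 := by rw [← pow_add]; exact hfg8
    have hsqC : ((((f g) ^ 4 : ℂˣ)) : ℂ) * (((f g) ^ 4 : ℂˣ) : ℂ) = 1 := by
      rw [← Units.val_mul, hsq, Units.val_one]
    rcases mul_self_eq_one_iff.mp hsqC with h | h
    · exact absurd (Units.ext h) hfg4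
    · exact Units.ext (by rw [h, Units.val_neg, Units.val_one])
  set fχ : Fˣ →* ℤˣ := (quadraticChar F).toUnitHom with hfχ
  have hfχcoe : ∀ u : Fˣ, ((fχ u : ℤ)) = quadraticChar F (u : F) := fun u =>
    (quadraticChar F).coe_toUnitHom u
  have hfχg : fχ (Nm g) = -1 := by
    apply Units.ext
    rw [hfχcoe, hNmcoe, hNg, Units.val_neg, Units.val_one]
  intro w
  by_cases hw : w = 0
  · subst hw
    rw [MulChar.map_nonunit M₈ not_isUnit_zero, Algebra.norm_zero, quadraticChar_zero]
    norm_num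
  · set u : Kˣ := Units.mk0 w hw with hu
    obtain ⟨k, hk⟩ := Subgroup.mem_zpowers_iff.mp (hg u)
    have hwu : w = ((g ^ k : Kˣ) : K) := by rw [hk]; rfl
    have lhs : (M₈ w) ^ 4 = (((-1 : ℂˣ) ^ k : ℂˣ) : ℂ) := by
      rw [hwu, ← hfcoe, map_zpow, ← Units.val_pow_eq_pow_val, key4 ℂˣ _ (f g) k, hfg4']
    have rhs : quadraticChar F (Algebra.norm F w) = (((-1 : ℤˣ) ^ k : ℤˣ) : ℤ) := by
      have hnw : Algebra.norm F w = ((Nm (g ^ k) : Fˣ) : F) := by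
        rw [hwu]; exact (hNmcoe _).symm
      rw [hnw, map_zpow, ← hfχcoe, map_zpow, hfχg]
    rw [lhs, rhs]
    rcases Int.even_or_odd k with he | ho
    · rw [Even.neg_one_zpow he, Even.neg_one_zpow (α := ℤˣ) he]; simp
    · have oddpow : ∀ (G : Type) (_ : Group G) (_ : HasDistribNeg G), (-1 : G) ^ k = -1 := by
        intro G _ _
        obtain ⟨m, hm⟩ := ho
        have h2 : ((-1 : G) ^ (2 : ℤ)) = 1 := by
          rw [show ((2:ℤ)) = ((2:ℕ):ℤ) by norm_num, zpow_natCast]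
          exact neg_one_sq
        rw [hm, zpow_add, zpow_one, zpow_mul, h2, one_zpow, one_mul]
      rw [oddpow ℂˣ _ _, oddpow ℤˣ _ _]; simp

lemma aux_count (q : ℕ) (hq3 : q % 4 = 3)
    (F : Type) [Field F] [Fintype F] (hF : Fintype.card F = q)
    (hcharF : ringChar F ≠ 2)
    (c : F) (hc : c ≠ 0) :
    ((Finset.univ.filter fun j : F => j ^ 4 = c).card : ℤ) = quadraticChar F c + 1 := by
  classical
  have hneg1 : quadraticChar F (-1) = -1 := by
    rw [quadraticChar_neg_one hcharF, hF, ZMod.χ₄_nat_eq_if_mod_four]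
    have h1 : q % 2 = 1 := by omega
    rw [if_neg (by omega), if_neg (by omega)]
  have hsplit : (Finset.univ.filter fun j : F => j ^ 4 = c) =
      (Finset.univ.filter fun u : F => u ^ 2 = c).biUnion
        (fun u => Finset.univ.filter fun j : F => j ^ 2 = u) := by
    ext j
    simp only [Finset.mem_filter, Finset.mem_biUnion, Finset.mem_univ, true_and]
    constructor
    · intro h
      exact ⟨j ^ 2, by rw [← pow_mul] at *; exact h, rfl⟩
    · rintro ⟨u, hu, rfl⟩
      rw [← pow_mul] at hu
      exact hu
  have hdisj : ∀ u₁ ∈ (Finset.univ.filter fun u : F => u ^ 2 = c), ∀ u₂ ∈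
      (Finset.univ.filter fun u : F => u ^ 2 = c), u₁ ≠ u₂ →
      Disjoint (Finset.univ.filter fun j : F => j ^ 2 = u₁)
        (Finset.univ.filter fun j : F => j ^ 2 = u₂) := by
    intro u₁ _ u₂ _ hne
    apply Finset.disjoint_left.mpr
    intro j hj1 hj2
    simp only [Finset.mem_filter, Finset.mem_univ, true_and] at hj1 hj2
    exact hne (hj1 ▸ hj2 ▸ rfl)
  have hcards : ∀ b : F, ((Finset.univ.filter fun j : F => j ^ 2 = b).card : ℤ) =
      quadraticChar F b + 1 := by
    intro b
    have := quadraticChar_card_sqrts hcharF b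
    rwa [Set.toFinset_setOf] at this
  rw [hsplit, Finset.card_biUnion hdisj]
  push_cast
  rw [Finset.sum_congr rfl (fun u _ => hcards u)]
  rw [Finset.sum_add_distrib, Finset.sum_const, ← hcards c]
  have hzero : ∑ u ∈ (Finset.univ.filter fun u : F => u ^ 2 = c), quadraticChar F u = 0 := by
    apply Finset.sum_involution (g := fun u _ => -u)
    · intro u hu
      simp only [Finset.mem_filter, Finset.mem_univ, true_and] at hu
      have : quadraticChar F (-u) = - quadraticChar F u := by
        rw [show -u = -1 * u by ring, map_mul, hneg1]; ring
      rw [this]; ring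
    · intro u hu h
      simp only [Finset.mem_filter, Finset.mem_univ, true_and] at hu
      intro heq
      have hu0 : u ≠ 0 := by
        intro h0; rw [h0] at hu; simp at hu; exact hc hu.symm
      have : (2 : F) * u = 0 := by linear_combination -heq
      rcases mul_eq_zero.mp this with h2 | h2
      · exact Ring.two_ne_zero hcharF h2
      · exact hu0 h2
    · intro u _
      simp
    · intro u hu
      simp only [Finset.mem_filter, Finset.mem_univ, true_and] at hu ⊢
      rw [neg_sq]; exact hu
  rw [hzero, zero_add]
  simpa using hcards c

lemma aux_Msq (q : ℕ) (hq3 : q % 4 = 3)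
    (F K : Type) [Field F] [Fintype F] [Field K] [Fintype K] [Algebra F K]
    (hF : Fintype.card F = q)
    (M₈ : MulChar K ℂ) (hM₈ : orderOf M₈ = 8)
    (j : F) (hj : j ≠ 0) :
    M₈ (algebraMap F K (j ^ 2)) = 1 := by
  have hj' : algebraMap F K j ≠ 0 := by
    simp [hj]
  set x := M₈ (algebraMap F K j) with hx
  have hx8 : x ^ 8 = 1 := by
    rw [hx, ← MulChar.pow_apply' _ (by norm_num : (8:ℕ) ≠ 0), ← hM₈, pow_orderOf_eq_one M₈,
      MulChar.one_apply (isUnit_iff_ne_zero.mpr hj')]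
  have hxq : x ^ (q - 1) = 1 := by
    rw [hx, ← map_pow, ← map_pow, ← hF, FiniteField.pow_card_sub_one_eq_one j hj, map_one,
      MulChar.map_one]
  have hd8 : orderOf x ∣ 8 := orderOf_dvd_of_pow_eq_one hx8
  have hdq : orderOf x ∣ q - 1 := orderOf_dvd_of_pow_eq_one hxq
  have hd2 : orderOf x ∣ 2 := by
    have hle : orderOf x ≤ 8 := Nat.le_of_dvd (by norm_num) hd8
    interval_cases h : orderOf x <;> omega
  have hx2 : x ^ 2 = 1 := orderOf_dvd_iff_pow_eq_one.mp hd2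
  rw [map_pow, map_pow, ← hx, hx2]

/-- For any multiplicative character ν on F_q (q ≡ 3 mod 4), so that φν⁴ is odd,
Σ_{j∈F_q*} (φν⁴)(j) V(j) = ν̄(a)·τ⁻¹·G₂(νN·M₈) + (φν̄)(a)·τ⁻¹·G₂(νN·M₈⁵). -/
theorem statement1
    (p n q : ℕ) [Fact p.Prime] (hpodd : Odd p) (hn : 0 < n) (hq : q = p ^ n)
    (hq3 : q % 4 = 3)
    (F K : Type) [Field F] [Fintype F] [Field K] [Fintype K] [Algebra F K]
    (hF : Fintype.card F = q) (hK : Fintype.card K = q ^ 2)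
    [Algebra (ZMod p) F]
    (ψ : F → ℂ)
    (hψ : ∀ y : F, ψ y =
      Complex.exp (2 * Real.pi * Complex.I * ((Algebra.trace (ZMod p) F y).val : ℂ) / p))
    (φ : MulChar F ℂ) (hφ : ∀ x : F, φ x = ((quadraticChar F x : ℤ) : ℂ))
    (M₈ : MulChar K ℂ) (hM₈ : orderOf M₈ = 8)
    (a : F) (ha : a ≠ 0)
    (τ : ℂ) (hτ : τ ^ 2 = (q : ℂ) * M₈ (algebraMap F K (-a)))
    (V : F → ℂ)
    (hV : ∀ j : F, V j = τ⁻¹ * φ j *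
      ∑ z ∈ Finset.univ.filter (fun z : K => Algebra.norm F z = a),
        M₈ z * ψ (Algebra.trace F K (algebraMap F K (j ^ 2) * z)))
    (ν : MulChar F ℂ) :
    ∑ j ∈ (Finset.univ : Finset F) \ {0}, (φ * ν ^ 4) j * V j =
      ν⁻¹ a * τ⁻¹ * (∑ z : K, ν (Algebra.norm F z) * M₈ z * ψ (Algebra.trace F K z)) +
      (φ * ν⁻¹) a * τ⁻¹ *
        (∑ z : K, ν (Algebra.norm F z) * (M₈ ^ 5) z * ψ (Algebra.trace F K z)) := by
  classical
  have hq2 : 3 ≤ q := by omega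
  have hcharF : ringChar F ≠ 2 := by
    intro h
    have := FiniteField.even_card_of_char_two h
    rw [hF] at this
    omega
  have hrank : Module.finrank F K = 2 := by
    have h := Module.card_eq_pow_finrank (K := F) (V := K)
    rw [hF, hK] at h
    exact (Nat.pow_right_injective (by omega) h.symm)
  have hM4 := aux_M4 p n q hn hq hq3 F K hF hK hcharF M₈ hM₈
  have hMsq := aux_Msq q hq3 F K hF M₈ hM₈
  have hνa : ν⁻¹ a * ν a = 1 := by
    rw [MulChar.inv_apply_eq_inv']
    have h1 : ν a * ν a⁻¹ = 1 := by rw [← map_mul, mul_inv_cancel₀ ha, MulChar.map_one]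
    have h0 : ν a ≠ 0 := fun h => by simp [h] at h1
    exact inv_mul_cancel₀ h0
  have hφsq : ∀ x : F, x ≠ 0 → φ x * φ x = 1 := by
    intro x hx
    rw [hφ x]
    have h := quadraticChar_sq_one hx
    rw [← pow_two] at *
    exact_mod_cast h
  -- notation
  set h' : K → ℂ := fun w => ν (Algebra.norm F w) * M₈ w * ψ (Algebra.trace F K w) with hh'
  have key : ∑ j ∈ (Finset.univ : Finset F) \ {0}, (φ * ν ^ 4) j * V j
      = τ⁻¹ * ν⁻¹ a * ∑ w : K,
          (1 + φ a * φ (Algebra.norm F w)) * h' w := by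
    calc
      ∑ j ∈ (Finset.univ : Finset F) \ {0}, (φ * ν ^ 4) j * V j
        = ∑ j ∈ (Finset.univ : Finset F) \ {0}, (τ⁻¹ * ν⁻¹ a) *
            ∑ w ∈ Finset.univ.filter (fun w : K => Algebra.norm F w = j ^ 4 * a), h' w := by
          apply Finset.sum_congr rfl
          intro j hj
          have hj0 : j ≠ 0 := by
            rw [Finset.mem_sdiff, Finset.mem_singleton] at hj
            exact hj.2
          have hej : algebraMap F K (j ^ 2) ≠ 0 := by
            simp [pow_ne_zero, hj0]
          have hNe : Algebra.norm F (algebraMap F K (j ^ 2)) = j ^ 4 := by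
            rw [Algebra.norm_algebraMap, hrank, ← pow_mul]
          -- reindex the inner sum
          have hAB : ∑ z ∈ Finset.univ.filter (fun z : K => Algebra.norm F z = a),
              M₈ z * ψ (Algebra.trace F K (algebraMap F K (j ^ 2) * z))
              = ∑ w ∈ Finset.univ.filter (fun w : K => Algebra.norm F w = j ^ 4 * a),
                M₈ w * ψ (Algebra.trace F K w) := by
            apply Finset.sum_nbij' (i := fun z => algebraMap F K (j ^ 2) * z)
              (j := fun w => (algebraMap F K (j ^ 2))⁻¹ * w)
            · intro z hz
              rw [Finset.mem_filter] at hz ⊢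
              refine ⟨Finset.mem_univ _, ?_⟩
              rw [map_mul, hNe, hz.2]
            · intro w hw
              rw [Finset.mem_filter] at hw ⊢
              refine ⟨Finset.mem_univ _, ?_⟩
              rw [← map_inv₀, map_mul, Algebra.norm_algebraMap, hrank, hw.2]
              field_simp
            · intro z _
              exact inv_mul_cancel_left₀ hej z
            · intro w _
              exact mul_inv_cancel_left₀ hej w
            · intro z hz
              rw [map_mul M₈, hMsq j hj0, one_mul]
          rw [hV j, MulChar.mul_apply, MulChar.pow_apply' _ (by norm_num), hAB]
          have hsum2 : ∑ w ∈ Finset.univ.filter (fun w : K => Algebra.norm F w = j ^ 4 * a), h' w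
              = (ν j ^ 4 * ν a) * ∑ w ∈ Finset.univ.filter
                  (fun w : K => Algebra.norm F w = j ^ 4 * a), M₈ w * ψ (Algebra.trace F K w) := by
            rw [Finset.mul_sum]
            apply Finset.sum_congr rfl
            intro w hw
            rw [Finset.mem_filter] at hw
            rw [hh']
            simp only
            rw [hw.2, map_mul, map_pow]
            ring
          rw [hsum2]
          set S : ℂ := ∑ w ∈ Finset.univ.filter
            (fun w : K => Algebra.norm F w = j ^ 4 * a), M₈ w * ψ (Algebra.trace F K w) with hS
          have e1 : φ j * ν j ^ 4 * (τ⁻¹ * φ j * S)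
              = (φ j * φ j) * (ν j ^ 4 * (τ⁻¹ * S)) := by ring
          have e2 : τ⁻¹ * ν⁻¹ a * (ν j ^ 4 * ν a * S)
              = (ν⁻¹ a * ν a) * (ν j ^ 4 * (τ⁻¹ * S)) := by ring
          rw [e1, e2, hνa, hφsq j hj0]
      _ = (τ⁻¹ * ν⁻¹ a) * ∑ j ∈ (Finset.univ : Finset F) \ {0},
            ∑ w ∈ Finset.univ.filter (fun w : K => Algebra.norm F w = j ^ 4 * a), h' w := by
          rw [Finset.mul_sum]
      _ = (τ⁻¹ * ν⁻¹ a) * ∑ w : K,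
            (((Finset.univ : Finset F) \ {0}).filter
                (fun j : F => Algebra.norm F w = j ^ 4 * a)).card * h' w := by
          congr 1
          calc ∑ j ∈ (Finset.univ : Finset F) \ {0},
                ∑ w ∈ Finset.univ.filter (fun w : K => Algebra.norm F w = j ^ 4 * a), h' w
              = ∑ j ∈ (Finset.univ : Finset F) \ {0}, ∑ w ∈ (Finset.univ : Finset K),
                  if Algebra.norm F w = j ^ 4 * a then h' w else 0 := by
                apply Finset.sum_congr rfl
                intro j _
                rw [Finset.sum_filter]
            _ = ∑ w ∈ (Finset.univ : Finset K), ∑ j ∈ (Finset.univ : Finset F) \ {0},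
                  if Algebra.norm F w = j ^ 4 * a then h' w else 0 := Finset.sum_comm
            _ = ∑ w : K, (((Finset.univ : Finset F) \ {0}).filter
                  (fun j : F => Algebra.norm F w = j ^ 4 * a)).card * h' w := by
                apply Finset.sum_congr rfl
                intro w _
                rw [← Finset.sum_filter, Finset.sum_const, nsmul_eq_mul]
      _ = τ⁻¹ * ν⁻¹ a * ∑ w : K, (1 + φ a * φ (Algebra.norm F w)) * h' w := by
          congr 1
          apply Finset.sum_congr rfl
          intro w _
          by_cases hw : Algebra.norm F w = 0
          · have h0 : h' w = 0 := by
              rw [hh']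
              simp only
              rw [hw, MulChar.map_nonunit ν not_isUnit_zero]
              ring
            rw [h0, mul_zero, mul_zero]
          · have hfil : (((Finset.univ : Finset F) \ {0}).filter
                (fun j : F => Algebra.norm F w = j ^ 4 * a))
                = Finset.univ.filter (fun j : F => j ^ 4 = Algebra.norm F w * a⁻¹) := by
              ext j
              simp only [Finset.mem_filter, Finset.mem_sdiff, Finset.mem_univ,
                Finset.mem_singleton, true_and]
              constructor
              · rintro ⟨hj0, hEq⟩
                rw [hEq]
                field_simp
              · intro hEq
                have hj0 : j ≠ 0 := by
                  rintro rfl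
                  rw [zero_pow (by norm_num)] at hEq
                  rcases mul_eq_zero.mp hEq.symm with h | h
                  · exact hw h
                  · exact inv_ne_zero ha h
                refine ⟨hj0, ?_⟩
                rw [hEq]
                field_simp
            rw [hfil]
            have hcnt := aux_count q hq3 F hF hcharF (Algebra.norm F w * a⁻¹)
              (mul_ne_zero hw (inv_ne_zero ha))
            have hinv : quadraticChar F a⁻¹ = quadraticChar F a := by
              have h1 : quadraticChar F a⁻¹ * quadraticChar F a = 1 := by
                rw [← map_mul, inv_mul_cancel₀ ha, MulChar.map_one]
              have h2 := quadraticChar_sq_one ha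
              calc quadraticChar F a⁻¹
                  = quadraticChar F a⁻¹ * (quadraticChar F a * quadraticChar F a) := by
                    rw [← pow_two, h2, mul_one]
                _ = (quadraticChar F a⁻¹ * quadraticChar F a) * quadraticChar F a := by ring
                _ = quadraticChar F a := by rw [h1, one_mul]
            congr 1
            have : ((Finset.univ.filter
                (fun j : F => j ^ 4 = Algebra.norm F w * a⁻¹)).card : ℂ)
                = ((quadraticChar F (Algebra.norm F w * a⁻¹) + 1 : ℤ) : ℂ) := by
              exact_mod_cast congrArg (fun x : ℤ => (x : ℂ)) hcnt
            rw [this, map_mul, hinv]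
            push_cast
            rw [hφ, hφ]
            ring
  rw [key, MulChar.mul_apply]
  have hRHS5 : ∀ z : K, ν (Algebra.norm F z) * (M₈ ^ 5) z * ψ (Algebra.trace F K z)
      = φ (Algebra.norm F z) * h' z := by
    intro z
    rw [MulChar.pow_apply' _ (by norm_num),
      show (M₈ z) ^ 5 = (M₈ z) ^ 4 * M₈ z by ring, hM4 z, ← hφ, hh']
    simp only
    ring
  rw [Finset.sum_congr rfl (fun z _ => hRHS5 z)]
  have hexp : ∑ w : K, (1 + φ a * φ (Algebra.norm F w)) * h' w
      = (∑ w : K, h' w) + φ a * ∑ w : K, φ (Algebra.norm F w) * h' w := by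
    rw [Finset.mul_sum, ← Finset.sum_add_distrib]
    apply Finset.sum_congr rfl
    intro w _
    ring
  rw [hexp]
  ring
end

section
/- For any multiplicative character D on F_q and j ∈ {1, −1} ⊂ F_q*, h(D,j) = −φ(j)·D̄(16)·J(D, φ). -/
open Finset
open scoped BigOperators Classical

/-- The sum h(D,j) = Σ_{x∈F_q*} D(x)·φ(1−x)·(φD̄²)(x(j+1)² + (j−1)²). -/
noncomputable def hKatz {F : Type} [Field F] [Fintype F] (φ D : MulChar F ℂ) (j : F) : ℂ :=
  ∑ x ∈ (Finset.univ : Finset F) \ {0},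
    D x * φ (1 - x) * (φ * (D⁻¹) ^ 2) (x * (j + 1) ^ 2 + (j - 1) ^ 2)

/-- For any multiplicative character D on F_q (q ≡ 3 mod 4) and j ∈ {1,−1},
h(D,j) = −φ(j)·D̄(16)·J(D,φ). -/
theorem statement6
    (p n q : ℕ) [Fact p.Prime] (hpodd : Odd p) (hn : 0 < n) (hq : q = p ^ n)
    (hq3 : q % 4 = 3)
    (F : Type) [Field F] [Fintype F] (hF : Fintype.card F = q)
    (φ : MulChar F ℂ) (hφ : ∀ x : F, φ x = ((quadraticChar F x : ℤ) : ℂ))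
    (D : MulChar F ℂ) (j : F) (hj : j = 1 ∨ j = -1) :
    hKatz φ D j = -φ j * D⁻¹ (16 : F) * ∑ y : F, D y * φ (1 - y) := by
  classical
  -- characteristic is not 2
  have hchar2 : ringChar F ≠ 2 := by
    rw [Ne, FiniteField.even_card_iff_char_two, hF]
    omega
  have h2 : (2 : F) ≠ 0 := Ring.two_ne_zero hchar2
  -- φ(-1) = -1
  have hφm1 : φ (-1) = -1 := by
    rw [hφ, quadraticChar_neg_one hchar2, hF, ZMod.χ₄_nat_three_mod_four hq3]
    norm_num
  -- φ(a²) = 1 for a ≠ 0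
  have hφsq : ∀ a : F, a ≠ 0 → φ (a ^ 2) = 1 := by
    intro a ha
    rw [hφ, quadraticChar_sq_one' ha]
    norm_num
  have hφ4 : φ (4 : F) = 1 := by
    have := hφsq 2 h2
    norm_num at this
    exact this
  -- D⁻¹ 16 = (D⁻¹ 4)^2
  have hD16 : D⁻¹ (16 : F) = (D⁻¹ (4 : F)) ^ 2 := by
    have : (16 : F) = 4 * 4 := by norm_num
    rw [this, map_mul, sq]
  have hS0 : D (0 : F) * φ (1 - 0) = 0 := by
    rw [MulChar.map_zero, zero_mul]
  have herase : ((Finset.univ : Finset F) \ {0}) = Finset.univ.erase 0 := by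
    rw [Finset.sdiff_singleton_eq_erase]
  rcases hj with hj | hj <;> subst hj
  · -- case j = 1 : argument is 4 * x
    have harg : ∀ x : F, x * ((1 : F) + 1) ^ 2 + ((1 : F) - 1) ^ 2 = 4 * x := by
      intro x; ring
    have key : ∀ x : F, x ≠ 0 →
        D x * φ (1 - x) * (φ * (D⁻¹) ^ 2) (4 * x)
          = D⁻¹ (16 : F) * (φ x * D⁻¹ x * φ (1 - x)) := by
      intro x hx
      have hDinv : D x * D⁻¹ x = 1 := by
        rw [← MulChar.mul_apply, mul_inv_cancel, MulChar.one_apply (isUnit_iff_ne_zero.mpr hx)]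
      rw [MulChar.mul_apply, MulChar.pow_apply' _ two_ne_zero, map_mul φ, map_mul D⁻¹, hφ4,
        one_mul, mul_pow, ← hD16]
      linear_combination (D⁻¹ (16 : F) * φ x * φ (1 - x) * D⁻¹ x) * hDinv
    have key2 : ∀ a : F, a ≠ 0 →
        φ a * D⁻¹ a * φ (1 - a) = -(D a⁻¹ * φ (1 - a⁻¹)) := by
      intro a ha
      have hinv : φ a⁻¹ = φ a := by
        have h1 : φ a * φ a⁻¹ = 1 := by rw [← map_mul, mul_inv_cancel₀ ha, map_one]
        have h2' : φ a * φ a = 1 := by rw [← map_mul, ← sq, hφsq a ha]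
        have hφa : φ a ≠ 0 := fun h => by simp [h] at h2'
        exact mul_left_cancel₀ hφa (h1.trans h2'.symm)
      have h1ma : (1 : F) - a⁻¹ = -1 * (1 - a) * a⁻¹ := by
        field_simp
        ring
      rw [MulChar.inv_apply', h1ma, map_mul, map_mul, hφm1, hinv]
      ring
    rw [hKatz, herase]
    calc ∑ x ∈ Finset.univ.erase (0 : F),
          D x * φ (1 - x) * (φ * (D⁻¹) ^ 2) (x * ((1 : F) + 1) ^ 2 + ((1 : F) - 1) ^ 2)
        = ∑ x ∈ Finset.univ.erase (0 : F), D⁻¹ (16 : F) * (φ x * D⁻¹ x * φ (1 - x)) := by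
          refine Finset.sum_congr rfl fun x hx => ?_
          rw [harg]
          exact key x (Finset.ne_of_mem_erase hx)
      _ = D⁻¹ (16 : F) * ∑ x ∈ Finset.univ.erase (0 : F), φ x * D⁻¹ x * φ (1 - x) := by
          rw [Finset.mul_sum]
      _ = D⁻¹ (16 : F) * ∑ t ∈ Finset.univ.erase (0 : F), -(D t * φ (1 - t)) := by
          congr 1
          refine Finset.sum_nbij' (fun a => a⁻¹) (fun a => a⁻¹) ?_ ?_ ?_ ?_ ?_
          · intro a ha
            exact Finset.mem_erase.mpr ⟨inv_ne_zero (Finset.ne_of_mem_erase ha), Finset.mem_univ _⟩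
          · intro a ha
            exact Finset.mem_erase.mpr ⟨inv_ne_zero (Finset.ne_of_mem_erase ha), Finset.mem_univ _⟩
          · intro a _; exact inv_inv a
          · intro a _; exact inv_inv a
          · intro a ha
            exact key2 a (Finset.ne_of_mem_erase ha)
      _ = D⁻¹ (16 : F) * -∑ t ∈ Finset.univ.erase (0 : F), D t * φ (1 - t) := by
          rw [Finset.sum_neg_distrib]
      _ = D⁻¹ (16 : F) * -∑ y : F, D y * φ (1 - y) := by
          congr 2
          exact Finset.sum_erase _ hS0
      _ = -φ (1 : F) * D⁻¹ (16 : F) * ∑ y : F, D y * φ (1 - y) := by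
          rw [map_one]; ring
  · -- case j = -1 : argument is 4
    have harg : ∀ x : F, x * ((-1 : F) + 1) ^ 2 + ((-1 : F) - 1) ^ 2 = 4 := by
      intro x; ring
    have hc : (φ * (D⁻¹) ^ 2) (4 : F) = D⁻¹ (16 : F) := by
      rw [MulChar.mul_apply, MulChar.pow_apply' _ two_ne_zero, hφ4, one_mul, hD16]
    rw [hKatz, herase]
    calc ∑ x ∈ Finset.univ.erase (0 : F),
          D x * φ (1 - x) * (φ * (D⁻¹) ^ 2) (x * ((-1 : F) + 1) ^ 2 + ((-1 : F) - 1) ^ 2)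
        = ∑ x ∈ Finset.univ.erase (0 : F), D⁻¹ (16 : F) * (D x * φ (1 - x)) := by
          refine Finset.sum_congr rfl fun x _ => ?_
          rw [harg, hc]; ring
      _ = D⁻¹ (16 : F) * ∑ x ∈ Finset.univ.erase (0 : F), D x * φ (1 - x) := by
          rw [Finset.mul_sum]
      _ = D⁻¹ (16 : F) * ∑ y : F, D y * φ (1 - y) := by
          congr 1
          exact Finset.sum_erase _ hS0
      _ = -φ (-1 : F) * D⁻¹ (16 : F) * ∑ y : F, D y * φ (1 - y) := by
          rw [hφm1]; ring
end

section
/- For j ∈ F_q* with j² ≠ 1, h(ε,j) = 0, i.e. Σ_{x∈F_q*} φ(1−x)·φ(x(j+1)² + (j−1)²) = 0. -/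
open Finset
open scoped BigOperators Classical

section Aux

variable {F : Type} [Field F] [Fintype F] [DecidableEq F]

private lemma chi_mul (x y : F) :
    ((quadraticChar F (x * y) : ℤ) : ℂ)
      = ((quadraticChar F x : ℤ) : ℂ) * ((quadraticChar F y : ℤ) : ℂ) := by
  rw [map_mul]; push_cast; ring

private lemma chi_sq {x : F} (hx : x ≠ 0) :
    ((quadraticChar F (x ^ 2) : ℤ) : ℂ) = 1 := by
  rw [quadraticChar_sq_one' hx]; norm_num

private lemma key_sum (hF2 : ringChar F ≠ 2) {c : F} (hc : c ≠ 0) :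
    ∑ x : F, ((quadraticChar F x : ℤ) : ℂ) * ((quadraticChar F (x + c) : ℤ) : ℂ)
      = -1 := by
  have h1 : ∑ x : F, ((quadraticChar F x : ℤ) : ℂ) * ((quadraticChar F (x + c) : ℤ) : ℂ)
      = ∑ x ∈ (Finset.univ : Finset F) \ {0},
          ((quadraticChar F x : ℤ) : ℂ) * ((quadraticChar F (x + c) : ℤ) : ℂ) := by
    rw [Finset.sum_sdiff_eq_sub (Finset.subset_univ _)]
    simp
  rw [h1]
  have h2 : ∀ x ∈ (Finset.univ : Finset F) \ {0},
      ((quadraticChar F x : ℤ) : ℂ) * ((quadraticChar F (x + c) : ℤ) : ℂ)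
        = ((quadraticChar F (1 + c * x⁻¹) : ℤ) : ℂ) := by
    intro x hx
    simp only [Finset.mem_sdiff, Finset.mem_singleton] at hx
    have hx0 : x ≠ 0 := hx.2
    have : x * (x + c) = x ^ 2 * (1 + c * x⁻¹) := by
      field_simp
    calc ((quadraticChar F x : ℤ) : ℂ) * ((quadraticChar F (x + c) : ℤ) : ℂ)
        = ((quadraticChar F (x * (x + c)) : ℤ) : ℂ) := (chi_mul x (x + c)).symm
      _ = ((quadraticChar F (x ^ 2 * (1 + c * x⁻¹)) : ℤ) : ℂ) := by rw [this]
      _ = ((quadraticChar F (x ^ 2) : ℤ) : ℂ) * ((quadraticChar F (1 + c * x⁻¹) : ℤ) : ℂ) :=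
          chi_mul _ _
      _ = ((quadraticChar F (1 + c * x⁻¹) : ℤ) : ℂ) := by rw [chi_sq hx0, one_mul]
  rw [Finset.sum_congr rfl h2]
  have h3 : ∑ x ∈ (Finset.univ : Finset F) \ {0},
      ((quadraticChar F (1 + c * x⁻¹) : ℤ) : ℂ)
      = ∑ y ∈ (Finset.univ : Finset F) \ {1}, ((quadraticChar F y : ℤ) : ℂ) := by
    apply Finset.sum_nbij' (fun x => 1 + c * x⁻¹) (fun y => c * (y - 1)⁻¹)
    · intro x hx
      simp only [Finset.mem_sdiff, Finset.mem_singleton, Finset.mem_univ, true_and] at hx ⊢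
      intro h
      have : c * x⁻¹ = 0 := by linear_combination h
      rcases mul_eq_zero.mp this with h' | h'
      · exact hc h'
      · exact hx (inv_eq_zero.mp h')
    · intro y hy
      simp only [Finset.mem_sdiff, Finset.mem_singleton, Finset.mem_univ, true_and] at hy ⊢
      intro h
      rcases mul_eq_zero.mp h with h' | h'
      · exact hc h'
      · exact hy (by
          have := inv_eq_zero.mp h'
          linear_combination this)
    · intro x hx
      simp only [Finset.mem_sdiff, Finset.mem_singleton, Finset.mem_univ, true_and] at hx
      field_simp
      rw [add_sub_cancel_left, div_self hc]
    · intro y hy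
      simp only [Finset.mem_sdiff, Finset.mem_singleton, Finset.mem_univ, true_and] at hy
      have hy1 : y - 1 ≠ 0 := sub_ne_zero.mpr hy
      field_simp
      ring
    · intro x _; rfl
  rw [h3, Finset.sum_sdiff_eq_sub (Finset.subset_univ _)]
  have h4 : ∑ y : F, ((quadraticChar F y : ℤ) : ℂ) = 0 := by
    have := quadraticChar_sum_zero hF2
    calc ∑ y : F, ((quadraticChar F y : ℤ) : ℂ)
        = (((∑ y : F, quadraticChar F y : ℤ)) : ℂ) := by push_cast; rfl
      _ = 0 := by rw [this]; norm_num
  rw [h4]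
  simp

end Aux

/-- For q ≡ 3 mod 4 and j ∈ F_q* with j² ≠ 1, h(ε,j) = 0, i.e.
Σ_{x∈F_q*} φ(1−x)·φ(x(j+1)² + (j−1)²) = 0. -/
theorem statement8
    (p n q : ℕ) [Fact p.Prime] (hpodd : Odd p) (hn : 0 < n) (hq : q = p ^ n)
    (hq3 : q % 4 = 3)
    (F : Type) [Field F] [Fintype F] (hF : Fintype.card F = q)
    (φ : MulChar F ℂ) (hφ : ∀ x : F, φ x = ((quadraticChar F x : ℤ) : ℂ))
    (j : F) (hj0 : j ≠ 0) (hj : j ^ 2 ≠ 1) :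
    ∑ x ∈ (Finset.univ : Finset F) \ {0},
        φ (1 - x) * φ (x * (j + 1) ^ 2 + (j - 1) ^ 2) = 0 := by
  classical
  -- basic facts
  have hcard3 : Fintype.card F % 4 = 3 := by rw [hF]; exact hq3
  have hodd : Fintype.card F % 2 = 1 := by omega
  have hF2 : ringChar F ≠ 2 := by
    intro h
    have := FiniteField.even_card_of_char_two h
    omega
  have h2 : (2 : F) ≠ 0 := Ring.two_ne_zero hF2
  have hj1 : j - 1 ≠ 0 := by
    intro h; apply hj; have : j = 1 := by linear_combination h
    rw [this]; ring
  have hjm1 : j + 1 ≠ 0 := by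
    intro h; apply hj; have : j = -1 := by linear_combination h
    rw [this]; ring
  have hnsq : ¬ IsSquare (-1 : F) := by
    rw [FiniteField.isSquare_neg_one_iff]
    omega
  have hj2 : j ^ 2 + 1 ≠ 0 := by
    intro h
    apply hnsq
    have : (-1 : F) = j ^ 2 := by linear_combination -h
    exact ⟨j, by rw [this]; ring⟩
  set a : F := (j + 1) ^ 2 with ha_def
  set b : F := (j - 1) ^ 2 with hb_def
  have ha : a ≠ 0 := pow_ne_zero _ hjm1
  have hb : b ≠ 0 := pow_ne_zero _ hj1
  have hab : a + b ≠ 0 := by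
    intro h
    apply hj2
    have h2' : (2 : F) * (j ^ 2 + 1) = 0 := by
      rw [ha_def, hb_def] at h; linear_combination h
    rcases mul_eq_zero.mp h2' with h' | h'
    · exact absurd h' h2
    · exact h'
  have hchim1 : ((quadraticChar F (-1) : ℤ) : ℂ) = -1 := by
    rw [quadraticChar_neg_one hF2, ZMod.χ₄_nat_eq_if_mod_four, hcard3, hodd]
    norm_num
  -- the full sum
  have hfull : ∑ x : F, φ (1 - x) * φ (x * a + b) = 1 := by
    have hsub : ∑ x : F, φ (1 - x) * φ (x * a + b)
        = ∑ x : F, φ x * φ ((1 - x) * a + b) := by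
      apply Finset.sum_nbij' (fun x => 1 - x) (fun x => 1 - x)
      · intro x _; exact Finset.mem_univ _
      · intro x _; exact Finset.mem_univ _
      · intro x _; ring
      · intro x _; ring
      · intro x _
        congr 1 <;> congr 1 <;> ring
    rw [hsub]
    have hterm : ∀ x : F, φ x * φ ((1 - x) * a + b)
        = ((quadraticChar F (-a) : ℤ) : ℂ) *
          (((quadraticChar F x : ℤ) : ℂ) *
            ((quadraticChar F (x + (-(a + b) * a⁻¹)) : ℤ) : ℂ)) := by
      intro x
      have harg : (1 - x) * a + b = -a * (x + (-(a + b) * a⁻¹)) := by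
        field_simp; ring
      rw [hφ, hφ, harg, chi_mul]
      ring
    rw [Finset.sum_congr rfl fun x _ => hterm x, ← Finset.mul_sum]
    have hc : (-(a + b) * a⁻¹ : F) ≠ 0 :=
      mul_ne_zero (neg_ne_zero.mpr hab) (inv_ne_zero ha)
    rw [key_sum hF2 hc]
    have hma : ((quadraticChar F (-a) : ℤ) : ℂ) = -1 := by
      have : (-a : F) = (-1) * a := by ring
      rw [this, chi_mul, hchim1, ha_def, chi_sq hjm1]
      ring
    rw [hma]; ring
  have h0term : φ (1 - (0 : F)) * φ ((0 : F) * a + b) = 1 := by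
    have : ((0 : F) * a + b) = b := by ring
    rw [this, hφ, hφ]
    simp only [sub_zero, map_one]
    rw [hb_def, chi_sq hj1]; norm_num
  rw [Finset.sum_sdiff_eq_sub (Finset.subset_univ _)]
  rw [hfull]
  rw [Finset.sum_singleton, h0term]
  ring
end

section
/- Let D be a nontrivial multiplicative character on F_q and ν₁ any multiplicative character on F_q. Then Σ_{j∈F_q*} ν₁⁴(j)·R(D,j) = J₂(ν₁N·M₈, D̄N) + J₂(ν₁N·M₈⁵, D̄N). -/
open Finset
open scoped BigOperators Classical

private lemma aux_mul_nonsquare {F : Type} [Field F] [Fintype F] [DecidableEq F]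
    {a b : F} (ha : a ≠ 0) (hb : b ≠ 0) (hna : ¬ IsSquare a) (hnb : ¬ IsSquare b) :
    IsSquare (a * b) := by
  have h1 : quadraticChar F a = -1 := quadraticChar_neg_one_iff_not_isSquare.mpr hna
  have h2 : quadraticChar F b = -1 := quadraticChar_neg_one_iff_not_isSquare.mpr hnb
  have h3 : quadraticChar F (a * b) = 1 := by rw [map_mul, h1, h2]; ring
  exact (quadraticChar_one_iff_isSquare (mul_ne_zero ha hb)).mp h3

private lemma aux_charP (p n q : ℕ) [Fact p.Prime] (hq : q = p ^ n)
    (F : Type) [Field F] [Fintype F] (hF : Fintype.card F = q) : CharP F p := by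
  have hp : p.Prime := Fact.out
  rcases CharP.exists F with ⟨r, hr⟩
  haveI := hr
  have hr' : r.Prime := CharP.char_is_prime F r
  have hdvd : r ∣ q := (CharP.cast_eq_zero_iff F r q).mp
    (by rw [← hF]; exact FiniteField.cast_card_eq_zero F)
  have hrp : r = p :=
    (Nat.prime_dvd_prime_iff_eq hr' hp).mp (hr'.dvd_of_dvd_pow (by rwa [hq] at hdvd))
  rwa [hrp] at hr

private lemma aux_norm_formula (p n q : ℕ) [Fact p.Prime] (hn : 0 < n) (hq : q = p ^ n)
    (F K : Type) [Field F] [Fintype F] [Field K] [Fintype K] [Algebra F K]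
    (hF : Fintype.card F = q) (hK : Fintype.card K = q ^ 2) (z : K) :
    algebraMap F K (Algebra.norm F z) = z * z ^ q := by
  have hp : p.Prime := Fact.out
  have hq1 : 1 < q := by rw [hq]; exact Nat.one_lt_pow hn.ne' hp.one_lt
  haveI hchF : CharP F p := aux_charP p n q hq F hF
  haveI : CharP K p := charP_of_injective_algebraMap (algebraMap F K).injective p
  have hrank : Module.finrank F K = 2 := by
    have hcard := Module.card_eq_pow_finrank (K := F) (V := K)
    rw [hF, hK] at hcard
    exact (Nat.pow_right_injective hq1 hcard.symm)
  have hcomm : ∀ x : F, iterateFrobenius K p n (algebraMap F K x) = algebraMap F K x := by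
    intro x
    rw [iterateFrobenius_def, ← map_pow, ← hq, ← hF, FiniteField.pow_card]
  let fa : K →ₐ[F] K := { iterateFrobenius K p n with commutes' := hcomm }
  have hfa : ∀ x : K, fa x = x ^ q := fun x => by
    show iterateFrobenius K p n x = x ^ q
    rw [iterateFrobenius_def, hq]
  have hbij : Function.Bijective fa :=
    Finite.injective_iff_bijective.mp fa.toRingHom.injective
  let σ : K ≃ₐ[F] K := AlgEquiv.ofBijective fa hbij
  have hσ : ∀ x : K, σ x = x ^ q := hfa
  have hσne : σ ≠ 1 := by
    obtain ⟨g, hg⟩ := IsCyclic.exists_generator (α := Kˣ)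
    intro h
    have h1 : (g : K) ^ q = (g : K) := by
      have := congrArg (fun e : K ≃ₐ[F] K => e (g : K)) h
      simpa [hσ] using this
    have hgq : g ^ q = g := Units.ext (by rw [Units.val_pow_eq_pow_val]; exact h1)
    have h2 : g ^ (q - 1) = 1 := by
      have h3 : g ^ (q - 1) * g = g := by
        rw [← pow_succ, Nat.sub_add_cancel hq1.le, hgq]
      exact mul_right_cancel (h3.trans (one_mul g).symm)
    have h3 : orderOf g ∣ q - 1 := orderOf_dvd_of_pow_eq_one h2
    have h4 : orderOf g = q ^ 2 - 1 := by
      rw [orderOf_eq_card_of_forall_mem_zpowers hg, Nat.card_eq_fintype_card, Fintype.card_units, hK]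
    have h5 : q ^ 2 - 1 ≤ q - 1 := Nat.le_of_dvd (by omega) (h4 ▸ h3)
    have h6 : q ^ 2 ≤ q := by
      have := Nat.sub_le_iff_le_add.mp h5
      rwa [Nat.sub_add_cancel hq1.le] at this
    have h7 : q < q ^ 2 := by nlinarith
    omega
  have huniv : (Finset.univ : Finset (K ≃ₐ[F] K)) = {1, σ} := by
    symm
    apply Finset.eq_univ_of_card
    rw [Finset.card_insert_of_notMem (by simpa using (Ne.symm hσne)), Finset.card_singleton,
      ← Nat.card_eq_fintype_card, IsGalois.card_aut_eq_finrank, hrank]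
  rw [Algebra.norm_eq_prod_automorphisms, huniv,
    Finset.prod_insert (by simpa using (Ne.symm hσne)), Finset.prod_singleton,
    AlgEquiv.one_apply, hσ]

private lemma aux_isSquare_norm_iff (p n q : ℕ) [Fact p.Prime] (hpodd : Odd p) (hn : 0 < n)
    (hq : q = p ^ n)
    (F K : Type) [Field F] [Fintype F] [Field K] [Fintype K] [Algebra F K]
    (hF : Fintype.card F = q) (hK : Fintype.card K = q ^ 2) {z : K} (hz : z ≠ 0) :
    IsSquare (Algebra.norm F z) ↔ IsSquare z := by
  classical
  have hp : p.Prime := Fact.out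
  have hq1 : 1 < q := by rw [hq]; exact Nat.one_lt_pow hn.ne' hp.one_lt
  have hqodd : Odd q := by rw [hq]; exact hpodd.pow
  haveI hchF : CharP F p := aux_charP p n q hq F hF
  haveI hchK : CharP K p := charP_of_injective_algebraMap (algebraMap F K).injective p
  have hp2 : p ≠ 2 := by rcases hpodd with ⟨k, hk⟩; omega
  have hcharK2 : ringChar K ≠ 2 := by rw [ringChar.eq K p]; exact hp2
  constructor
  · rintro ⟨y, hy⟩
    have hNz : Algebra.norm F z ≠ 0 := by
      rw [Algebra.norm_ne_zero_iff]; exact hz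
    have hy0 : y ≠ 0 := by rintro rfl; rw [mul_zero] at hy; exact hNz hy
    rw [FiniteField.isSquare_iff hcharK2 hz]
    have h2dvd : 2 ∣ q - 1 := by rcases hqodd with ⟨k, hk⟩; omega
    have hexp : Fintype.card K / 2 = (q + 1) * ((q - 1) / 2) := by
      rw [hK, ← Nat.mul_div_assoc _ h2dvd]
      have h1 : (q + 1) * (q - 1) = q ^ 2 - 1 := by
        have : 1 ≤ q := hq1.le
        zify [this, (by nlinarith : 1 ≤ q ^ 2)]
        ring
      rw [h1]
      rcases (hqodd.pow (n := 2)) with ⟨t, ht⟩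
      omega
    have hnrm : z ^ (q + 1) = algebraMap F K (Algebra.norm F z) := by
      rw [aux_norm_formula p n q hn hq F K hF hK z, pow_succ']
    rw [hexp, pow_mul, hnrm, hy, map_mul, ← pow_two, ← pow_mul,
      Nat.mul_div_cancel' h2dvd, ← map_pow, ← hF, FiniteField.pow_card_sub_one_eq_one y hy0,
      map_one]
  · rintro ⟨w, rfl⟩
    exact ⟨Algebra.norm F w, by rw [← map_mul]⟩

/-- For a nontrivial multiplicative character D on F_q (q ≡ 3 mod 4) and any
character ν₁, Σ_{j∈F_q*} ν₁⁴(j)·R(D,j) = J₂(ν₁N·M₈, D̄N) + J₂(ν₁N·M₈⁵, D̄N), where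
R(D,j) = Σ_{z∈F_{q²}, Nz=j⁴} M₈(z)·(D̄N)(1−z). -/
theorem statement10
    (p n q : ℕ) [Fact p.Prime] (hpodd : Odd p) (hn : 0 < n) (hq : q = p ^ n)
    (hq3 : q % 4 = 3)
    (F K : Type) [Field F] [Fintype F] [Field K] [Fintype K] [Algebra F K]
    (hF : Fintype.card F = q) (hK : Fintype.card K = q ^ 2)
    (φ : MulChar F ℂ) (hφ : ∀ x : F, φ x = ((quadraticChar F x : ℤ) : ℂ))
    (M₈ : MulChar K ℂ) (hM₈ : orderOf M₈ = 8)
    (D : MulChar F ℂ) (hD : D ≠ 1) (ν₁ : MulChar F ℂ) :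
    ∑ j ∈ (Finset.univ : Finset F) \ {0},
        (ν₁ ^ 4) j *
          ∑ z ∈ Finset.univ.filter (fun z : K => Algebra.norm F z = j ^ 4),
            M₈ z * D⁻¹ (Algebra.norm F (1 - z)) =
      (∑ z : K, ν₁ (Algebra.norm F z) * M₈ z * D⁻¹ (Algebra.norm F (1 - z))) +
      (∑ z : K, ν₁ (Algebra.norm F z) * (M₈ ^ 5) z * D⁻¹ (Algebra.norm F (1 - z))) := by
  classical
  have hp : p.Prime := Fact.out
  have hq1 : 1 < q := by rw [hq]; exact Nat.one_lt_pow hn.ne' hp.one_lt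
  haveI hchF : CharP F p := aux_charP p n q hq F hF
  have hp2 : p ≠ 2 := by rcases hpodd with ⟨k, hk⟩; omega
  have hneg1 : ¬ IsSquare (-1 : F) := by
    rw [FiniteField.isSquare_neg_one_iff, hF, hq3]; simp
  have hM8zero : M₈ (0 : K) = 0 := M₈.map_nonunit (by simp)
  have h8 : M₈ ^ 8 = 1 := by rw [← hM₈]; exact pow_orderOf_eq_one M₈
  have hM8pow : ∀ x : K, x ≠ 0 → M₈ x ^ 8 = 1 := by
    intro x hx
    have h := congrArg (fun χ : MulChar K ℂ => χ x) h8
    simpa [MulChar.pow_apply' M₈ (by norm_num : (8:ℕ) ≠ 0) x,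
      MulChar.one_apply (isUnit_iff_ne_zero.mpr hx)] using h
  have key : ∀ z : K,
      (∑ j ∈ ((Finset.univ : Finset F) \ {0}).filter (fun j => Algebra.norm F z = j ^ 4),
        (ν₁ ^ 4) j) = ν₁ (Algebra.norm F z) * (1 + M₈ z ^ 4) := by
    intro z
    by_cases hz : z = 0
    · subst hz
      have hN0 : Algebra.norm F (0 : K) = 0 := Algebra.norm_zero
      rw [hN0]
      have hempty : ((Finset.univ : Finset F) \ {0}).filter (fun j => (0:F) = j ^ 4) = ∅ := by
        ext j
        simp only [Finset.mem_filter, Finset.mem_sdiff, Finset.mem_univ, Finset.mem_singleton,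
          Finset.notMem_empty, true_and, iff_false, not_and]
        intro hj0 hj
        exact hj0 (pow_eq_zero_iff (by norm_num : (4:ℕ) ≠ 0) |>.mp hj.symm)
      rw [hempty, Finset.sum_empty, MulChar.map_nonunit ν₁ (by exact not_isUnit_zero), hM8zero]
      ring
    · by_cases hsq : IsSquare z
      · obtain ⟨w, rfl⟩ := hsq
        have hw0 : w ≠ 0 := by rintro rfl; simp at hz
        have hM84 : M₈ (w * w) ^ 4 = 1 := by
          rw [map_mul]
          linear_combination hM8pow w hw0
        have hNw0 : Algebra.norm F w ≠ 0 := by rw [Algebra.norm_ne_zero_iff]; exact hw0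
        obtain ⟨c, hc0, hc4⟩ : ∃ c : F, c ≠ 0 ∧ Algebra.norm F (w * w) = c ^ 4 := by
          by_cases hs : IsSquare (Algebra.norm F w)
          · obtain ⟨c, hc⟩ := hs
            have hcz : c ≠ 0 := by rintro rfl; rw [mul_zero] at hc; exact hNw0 hc
            exact ⟨c, hcz, by rw [map_mul, hc]; ring⟩
          · have hs2 : IsSquare (Algebra.norm F w * -1) :=
              aux_mul_nonsquare hNw0 (by norm_num) hs hneg1
            obtain ⟨c, hc⟩ := hs2
            have hcz : c ≠ 0 := by
              rintro rfl
              rw [mul_zero] at hc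
              exact (mul_ne_zero hNw0 (by norm_num : (-1:F) ≠ 0)) hc
            refine ⟨c, hcz, ?_⟩
            rw [map_mul]
            linear_combination (- Algebra.norm F w + c * c) * hc
        have hset : ((Finset.univ : Finset F) \ {0}).filter
            (fun j => Algebra.norm F (w * w) = j ^ 4) = {c, -c} := by
          ext j
          simp only [Finset.mem_filter, Finset.mem_sdiff, Finset.mem_univ, Finset.mem_singleton,
            Finset.mem_insert, true_and]
          constructor
          · rintro ⟨hj0, hj⟩
            have h4 : j ^ 4 = c ^ 4 := by rw [← hj, hc4]
            have hfac : (j - c) * ((j + c) * (j ^ 2 + c ^ 2)) = 0 := by linear_combination h4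
            rcases mul_eq_zero.mp hfac with h | h
            · exact Or.inl (sub_eq_zero.mp h)
            rcases mul_eq_zero.mp h with h | h
            · exact Or.inr (eq_neg_of_add_eq_zero_left h)
            · exfalso
              apply hneg1
              refine ⟨j * c⁻¹, ?_⟩
              field_simp
              linear_combination -h
          · rintro (rfl | rfl)
            · exact ⟨hc0, hc4⟩
            · exact ⟨neg_ne_zero.mpr hc0, by rw [hc4]; ring⟩
        have hcnc : c ≠ -c := by
          intro h
          have h2 : (2 : F) * c = 0 := by linear_combination h
          rcases mul_eq_zero.mp h2 with h2 | h2
          · have hdvd : (p : ℕ) ∣ 2 := (CharP.cast_eq_zero_iff F p 2).mp (by exact_mod_cast h2)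
            have := Nat.le_of_dvd (by norm_num) hdvd
            rcases hpodd with ⟨k, hk⟩
            have := hp.two_le
            omega
          · exact hc0 h2
        rw [hset, Finset.sum_pair hcnc, hM84, hc4]
        have e1 : (ν₁ ^ 4) c = ν₁ (c ^ 4) := by
          rw [MulChar.pow_apply' ν₁ (by norm_num : (4:ℕ) ≠ 0) c, ← map_pow]
        have e2 : (ν₁ ^ 4) (-c) = ν₁ (c ^ 4) := by
          rw [MulChar.pow_apply' ν₁ (by norm_num : (4:ℕ) ≠ 0) (-c), ← map_pow,
            (by ring : (-c)^4 = c^4)]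
        rw [e1, e2]; ring
      · have hNsq : ¬ IsSquare (Algebra.norm F z) := fun h =>
          hsq ((aux_isSquare_norm_iff p n q hpodd hn hq F K hF hK hz).mp h)
        have hset : ((Finset.univ : Finset F) \ {0}).filter
            (fun j => Algebra.norm F z = j ^ 4) = ∅ := by
          ext j
          simp only [Finset.mem_filter, Finset.mem_sdiff, Finset.mem_univ, Finset.mem_singleton,
            Finset.notMem_empty, true_and, iff_false, not_and]
          intro hj0 hj
          exact hNsq ⟨j ^ 2, by rw [hj]; ring⟩
        have hM84 : M₈ z ^ 4 = -1 := by
          have hsq8 : (M₈ z ^ 4 - 1) * (M₈ z ^ 4 + 1) = 0 := by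
            linear_combination hM8pow z hz
          rcases mul_eq_zero.mp hsq8 with h | h
          · exfalso
            have h1 : M₈ z ^ 4 = 1 := by linear_combination h
            have hM4 : M₈ ^ 4 = 1 := by
              apply MulChar.ext
              intro a
              rw [MulChar.pow_apply_coe, MulChar.one_apply_coe]
              by_cases ha : IsSquare ((a : K))
              · obtain ⟨v, hv⟩ := ha
                have hv0 : v ≠ 0 := by
                  rintro rfl
                  rw [mul_zero] at hv
                  exact a.ne_zero hv
                rw [hv, map_mul]
                linear_combination hM8pow v hv0
              · have hz' : ¬ IsSquare (z⁻¹) := fun hh => hsq (isSquare_inv.mp hh)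
                have hsq' : IsSquare ((a : K) * z⁻¹) :=
                  aux_mul_nonsquare a.ne_zero (inv_ne_zero hz) ha hz'
                obtain ⟨t, ht⟩ := hsq'
                have ht0 : t ≠ 0 := by
                  rintro rfl
                  rw [mul_zero] at ht
                  exact (mul_ne_zero a.ne_zero (inv_ne_zero hz)) ht
                have ha' : (a : K) = z * (t * t) := by
                  rw [← ht]
                  field_simp
                rw [ha', map_mul, map_mul]
                linear_combination (M₈ t ^ 8) * h1 + hM8pow t ht0
            have hdvd : (8 : ℕ) ∣ 4 := by rw [← hM₈]; exact orderOf_dvd_of_pow_eq_one hM4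
            norm_num at hdvd
          · linear_combination h
        rw [hset, Finset.sum_empty, hM84]
        ring
  calc
    ∑ j ∈ (Finset.univ : Finset F) \ {0},
        (ν₁ ^ 4) j *
          ∑ z ∈ Finset.univ.filter (fun z : K => Algebra.norm F z = j ^ 4),
            M₈ z * D⁻¹ (Algebra.norm F (1 - z))
      = ∑ j ∈ (Finset.univ : Finset F) \ {0}, ∑ z ∈ (Finset.univ : Finset K),
          if Algebra.norm F z = j ^ 4 then
            (ν₁ ^ 4) j * (M₈ z * D⁻¹ (Algebra.norm F (1 - z))) else 0 := by
        refine Finset.sum_congr rfl fun j _ => ?_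
        rw [Finset.mul_sum, Finset.sum_filter]
    _ = ∑ z ∈ (Finset.univ : Finset K), ∑ j ∈ (Finset.univ : Finset F) \ {0},
          if Algebra.norm F z = j ^ 4 then
            (ν₁ ^ 4) j * (M₈ z * D⁻¹ (Algebra.norm F (1 - z))) else 0 := Finset.sum_comm
    _ = ∑ z : K,
          (∑ j ∈ ((Finset.univ : Finset F) \ {0}).filter (fun j => Algebra.norm F z = j ^ 4),
            (ν₁ ^ 4) j) * (M₈ z * D⁻¹ (Algebra.norm F (1 - z))) := by
        refine Finset.sum_congr rfl fun z _ => ?_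
        rw [Finset.sum_mul, Finset.sum_filter]
    _ = ∑ z : K,
          (ν₁ (Algebra.norm F z) * (1 + M₈ z ^ 4)) * (M₈ z * D⁻¹ (Algebra.norm F (1 - z))) := by
        refine Finset.sum_congr rfl fun z _ => ?_
        rw [key z]
    _ = (∑ z : K, ν₁ (Algebra.norm F z) * M₈ z * D⁻¹ (Algebra.norm F (1 - z))) +
        (∑ z : K, ν₁ (Algebra.norm F z) * (M₈ ^ 5) z * D⁻¹ (Algebra.norm F (1 - z))) := by
        rw [← Finset.sum_add_distrib]
        refine Finset.sum_congr rfl fun z _ => ?_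
        rw [MulChar.pow_apply' M₈ (by norm_num : (5:ℕ) ≠ 0) z]
        ring
end
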